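/- arXiv:2201.04238 — 3 statements merged into one kernel-verified Lean document; each statement's English description precedes it below -/
import Mathlib

section
/- Let a < c < b < d be reals and let P : (a,d) → M_{n×n}(ℝ) be a continuous matrix function such that each P(t) is an orthogonal projection of constant rank k. Suppose Im(P(t)) admits a continuous choice of basis γ₁, …, γ_k : (a,b) → ℝⁿ on (a,b), and also admits some continuous choice of basis on (c,d). Then γ₁, …, γ_k may be extended to continuous functions on (a,d) that form a basis of Im(P(t)) for every t ∈ (a,d). -/
open scoped RealInnerProductSpace BigOperators

/-- The Euclidean operator norm of a real matrix: `sup {‖Ax‖ : ‖x‖ = 1}`. -/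
noncomputable def opNorm {m n : ℕ} (A : Matrix (Fin m) (Fin n) ℝ) : ℝ :=
  sSup {c : ℝ | ∃ x : EuclideanSpace ℝ (Fin n), ‖x‖ = 1 ∧ c = ‖Matrix.toEuclideanLin A x‖}

/-- The matrix of the orthogonal projection of `ℝⁿ` onto the subspace `U`. -/
noncomputable def projMatrix {n : ℕ} (U : Submodule ℝ (EuclideanSpace ℝ (Fin n))) :
    Matrix (Fin n) (Fin n) ℝ :=
  Matrix.toEuclideanLin.symm (U.subtype ∘ₗ (U.orthogonalProjection).toLinearMap)

/-- The minimal stretch of a matrix `A` on a subspace `U`: `inf {‖Ax‖ : x ∈ U, ‖x‖ = 1}`. -/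
noncomputable def minStretch {m n : ℕ} (A : Matrix (Fin m) (Fin n) ℝ)
    (U : Submodule ℝ (EuclideanSpace ℝ (Fin n))) : ℝ :=
  sInf {c : ℝ | ∃ x ∈ U, ‖x‖ = 1 ∧ c = ‖Matrix.toEuclideanLin A x‖}

/-- Applying an invertible matrix to a linearly independent family yields a linearly
independent family with the same span. -/
lemma basis_transform_aux {E : Type*} [AddCommGroup E] [Module ℝ E] {k : ℕ}
    (w : Fin k → E) (hli : LinearIndependent ℝ w)
    (M : Matrix (Fin k) (Fin k) ℝ) (hM : IsUnit M.det) :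
    LinearIndependent ℝ (fun i => ∑ j, M i j • w j) ∧
      Submodule.span ℝ (Set.range fun i => ∑ j, M i j • w j) =
        Submodule.span ℝ (Set.range w) := by
  classical
  set U := Submodule.span ℝ (Set.range w) with hU
  let B : Module.Basis (Fin k) ℝ U := Module.Basis.span hli
  have hMt : IsUnit M.transpose.det := by rwa [Matrix.det_transpose]
  let B' : Module.Basis (Fin k) ℝ U := B.map (Matrix.toLinearEquiv B M.transpose hMt)
  have hB' : ∀ i, (B' i : E) = ∑ j, M i j • w j := by
    intro i
    have h1 : B' i = ∑ j, M i j • B j := by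
      simp only [B', Module.Basis.map_apply, Matrix.toLinearEquiv_apply, Matrix.toLin_self,
        Matrix.transpose_apply]
    rw [h1]
    simp only [AddSubmonoidClass.coe_finset_sum, SetLike.val_smul]
    refine Finset.sum_congr rfl fun j _ => ?_
    exact congrArg (fun x => M i j • x) (congrArg Subtype.val (Module.Basis.span_apply hli j))
  have hfun : (fun i => ∑ j, M i j • w j) = U.subtype ∘ B' := by
    funext i; exact (hB' i).symm
  constructor
  · have h := B'.linearIndependent.map' U.subtype U.ker_subtype
    rwa [hfun]
  · rw [hfun, Set.range_comp, ← Submodule.map_span, B'.span_eq, Submodule.map_top,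
      Submodule.range_subtype]

/-- Two continuous choices of basis for the images of a continuous family of rank-`k`
orthogonal projections, defined on overlapping intervals `(a,b)` and `(c,d)` with
`a < c < b < d`, can be stitched: the basis `γ` on `(a,b)` extends to a continuous choice
of basis on all of `(a,d)` (agreeing with `γ` up to the overlap). -/
theorem extend_continuous_basis {n k : ℕ} (a c b d : ℝ)
    (hac : a < c) (hcb : c < b) (hbd : b < d)
    (P : ℝ → Matrix (Fin n) (Fin n) ℝ) (hPcont : ContinuousOn P (Set.Ioo a d))
    (hPproj : ∀ t ∈ Set.Ioo a d,
      P t * P t = P t ∧ (P t).transpose = P t ∧ (P t).rank = k)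
    (γ : Fin k → ℝ → EuclideanSpace ℝ (Fin n))
    (hγcont : ∀ i, ContinuousOn (γ i) (Set.Ioo a b))
    (hγbasis : ∀ t ∈ Set.Ioo a b, LinearIndependent ℝ (fun i => γ i t) ∧
      Submodule.span ℝ (Set.range fun i => γ i t) =
        LinearMap.range (Matrix.toEuclideanLin (P t)))
    (β : Fin k → ℝ → EuclideanSpace ℝ (Fin n))
    (hβcont : ∀ i, ContinuousOn (β i) (Set.Ioo c d))
    (hβbasis : ∀ t ∈ Set.Ioo c d, LinearIndependent ℝ (fun i => β i t) ∧
      Submodule.span ℝ (Set.range fun i => β i t) =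
        LinearMap.range (Matrix.toEuclideanLin (P t))) :
    ∃ γ' : Fin k → ℝ → EuclideanSpace ℝ (Fin n),
      (∀ i, ContinuousOn (γ' i) (Set.Ioo a d)) ∧
      (∀ t ∈ Set.Ioo a d, LinearIndependent ℝ (fun i => γ' i t) ∧
        Submodule.span ℝ (Set.range fun i => γ' i t) =
          LinearMap.range (Matrix.toEuclideanLin (P t))) ∧
      ∀ i, ∀ t ∈ Set.Ioc a c, γ' i t = γ i t := by
  classical
  set s : ℝ := (c + b) / 2 with hsdef
  have hcs : c < s := by rw [hsdef]; linarith
  have hsb : s < b := by rw [hsdef]; linarith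
  have hsab : s ∈ Set.Ioo a b := ⟨lt_trans hac hcs, hsb⟩
  have hscd : s ∈ Set.Ioo c d := ⟨hcs, lt_trans hsb hbd⟩
  obtain ⟨hγli, hγsp⟩ := hγbasis s hsab
  obtain ⟨hβli, hβsp⟩ := hβbasis s hscd
  set V := LinearMap.range (Matrix.toEuclideanLin (P s)) with hV
  let Bβ : Module.Basis (Fin k) ℝ V := (Module.Basis.span hβli).map (LinearEquiv.ofEq _ _ hβsp)
  have hBβ : ∀ j, (Bβ j : EuclideanSpace ℝ (Fin n)) = β j s := by
    intro j; simp [Bβ, Module.Basis.span_apply]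
  let Bγ : Module.Basis (Fin k) ℝ V := (Module.Basis.span hγli).map (LinearEquiv.ofEq _ _ hγsp)
  have hBγ : ∀ i, (Bγ i : EuclideanSpace ℝ (Fin n)) = γ i s := by
    intro i; simp [Bγ, Module.Basis.span_apply]
  set M : Matrix (Fin k) (Fin k) ℝ := fun i j => Bβ.repr (Bγ i) j with hMdef
  have hMdet : IsUnit M.det := by
    have hMeq : M = (Bβ.toMatrix Bγ).transpose := by
      ext i j; simp [hMdef, Matrix.transpose_apply, Module.Basis.toMatrix_apply]
    have : Invertible (Bβ.toMatrix Bγ) := Bβ.invertibleToMatrix Bγ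
    rw [hMeq, Matrix.det_transpose]
    exact (Matrix.isUnit_iff_isUnit_det _).mp (isUnit_of_invertible _)
  have hγs : ∀ i, γ i s = ∑ j, M i j • β j s := by
    intro i
    have h1 : (∑ j, Bβ.repr (Bγ i) j • Bβ j) = Bγ i := Bβ.sum_repr (Bγ i)
    have h2 := congrArg (Subtype.val) h1
    simp only [AddSubmonoidClass.coe_finset_sum, SetLike.val_smul] at h2
    rw [← hBγ i, ← h2]
    refine Finset.sum_congr rfl fun j _ => ?_
    rw [hBβ j]
  -- the glued family
  refine ⟨fun i => (Set.Iic s).piecewise (γ i) (fun t => ∑ j, M i j • β j t), ?_, ?_, ?_⟩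
  · -- continuity
    intro i
    have hδcont : ContinuousOn (fun t => ∑ j, M i j • β j t) (Set.Ioo c d) := by
      apply continuousOn_finset_sum
      intro j _
      exact (hβcont j).const_smul (M i j)
    have hite : (Set.Iic s).ite (Set.Ioo a b) (Set.Ioo c d) = Set.Ioo a d := by
      ext x
      by_cases hx : x ≤ s
      · simp only [Set.ite, Set.mem_union, Set.mem_inter_iff, Set.mem_diff, Set.mem_Iic,
          Set.mem_Ioo, hx, and_true, not_true, and_false, or_false]
        constructor
        · rintro ⟨h1, h2⟩; exact ⟨h1, by linarith⟩
        · rintro ⟨h1, _⟩; exact ⟨h1, by linarith⟩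
      · simp only [Set.ite, Set.mem_union, Set.mem_inter_iff, Set.mem_diff, Set.mem_Iic,
          Set.mem_Ioo, hx, and_false, not_false_iff, and_true, false_or]
        push_neg at hx
        constructor
        · rintro ⟨_, h2⟩; exact ⟨by linarith, h2⟩
        · rintro ⟨_, h2⟩; exact ⟨by linarith, h2⟩
    rw [← hite]
    refine continuousOn_piecewise_ite (hγcont i) hδcont ?_ ?_
    · rw [frontier_Iic]
      rw [Set.inter_eq_right.mpr (by simpa using hsab : ({s} : Set ℝ) ⊆ Set.Ioo a b),
        Set.inter_eq_right.mpr (by simpa using hscd : ({s} : Set ℝ) ⊆ Set.Ioo c d)]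
    · rw [frontier_Iic]
      intro x hx
      have hxs : x = s := hx.2
      subst hxs
      exact hγs i
  · -- basis property
    intro t ht
    by_cases hts : t ≤ s
    · have htab : t ∈ Set.Ioo a b := ⟨ht.1, lt_of_le_of_lt hts hsb⟩
      have heq : (fun i => (Set.Iic s).piecewise (γ i) (fun u => ∑ j, M i j • β j u) t)
          = fun i => γ i t := by
        funext i; exact Set.piecewise_eq_of_mem _ _ _ hts
      rw [heq]
      exact hγbasis t htab
    · push_neg at hts
      have htcd : t ∈ Set.Ioo c d := ⟨lt_trans hcs hts, ht.2⟩
      have heq : (fun i => (Set.Iic s).piecewise (γ i) (fun u => ∑ j, M i j • β j u) t)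
          = fun i => ∑ j, M i j • β j t := by
        funext i; exact Set.piecewise_eq_of_notMem _ _ _ (not_le.mpr hts)
      rw [heq]
      obtain ⟨hli, hsp⟩ := hβbasis t htcd
      obtain ⟨h1, h2⟩ := basis_transform_aux _ hli M hMdet
      exact ⟨h1, by rw [h2, hsp]⟩
  · -- agreement on (a, c]
    intro i t ht
    exact Set.piecewise_eq_of_mem _ _ _ (le_of_lt (lt_of_le_of_lt ht.2 hcs))
end

section
/- Let X and Y be linear subspaces of ℝⁿ with dim X = dim Y = m. Then there exist linear subspaces X̃ ⊆ X and Ỹ ⊆ Y with dim X̃ ≥ ⌊m/2⌋ and dim Ỹ ≥ ⌊m/2⌋ such that X̃ is orthogonal to Ỹ (i.e. ⟨x, y⟩ = 0 for all x ∈ X̃, y ∈ Ỹ). -/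
open scoped RealInnerProductSpace BigOperators

/-- Given two `m`-dimensional subspaces `X, Y` of `ℝⁿ`, there exist subspaces `X̃ ⊆ X` and
`Ỹ ⊆ Y` of dimensions at least `⌊m/2⌋` that are orthogonal to each other. -/
theorem exists_orthogonal_half_dimensional_subspaces {n m : ℕ}
    (X Y : Submodule ℝ (EuclideanSpace ℝ (Fin n)))
    (hX : Module.finrank ℝ X = m) (hY : Module.finrank ℝ Y = m) :
    ∃ X' Y' : Submodule ℝ (EuclideanSpace ℝ (Fin n)),
      X' ≤ X ∧ Y' ≤ Y ∧
      m / 2 ≤ Module.finrank ℝ X' ∧ m / 2 ≤ Module.finrank ℝ Y' ∧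
      ∀ x ∈ X', ∀ y ∈ Y', (inner ℝ x y : ℝ) = 0 := by
  classical
  -- choose a subspace `X'` of `X` of dimension `k = m - m/2`
  set k : ℕ := m - m / 2 with hk
  have hkm : k ≤ m := Nat.sub_le _ _
  obtain ⟨b⟩ : Nonempty (Module.Basis (Fin m) ℝ X) := ⟨(Module.finBasis ℝ X).reindex (finCongr hX)⟩
  set v : Fin k → EuclideanSpace ℝ (Fin n) := fun i => (b (Fin.castLE hkm i) : EuclideanSpace ℝ (Fin n)) with hv
  have hli : LinearIndependent ℝ v := by
    have h1 : LinearIndependent ℝ (fun i : Fin m => (b i : EuclideanSpace ℝ (Fin n))) :=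
      b.linearIndependent.map' X.subtype X.ker_subtype
    exact h1.comp (Fin.castLE hkm) (Fin.castLE_injective hkm)
  set X' : Submodule ℝ (EuclideanSpace ℝ (Fin n)) := Submodule.span ℝ (Set.range v) with hX'
  have hX'X : X' ≤ X := by
    rw [hX', Submodule.span_le]
    rintro - ⟨i, rfl⟩
    exact (b (Fin.castLE hkm i)).2
  have hX'rank : Module.finrank ℝ X' = k := by
    rw [hX', finrank_span_eq_card hli, Fintype.card_fin]
  set Y' : Submodule ℝ (EuclideanSpace ℝ (Fin n)) := Y ⊓ X'ᗮ with hY'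
  refine ⟨X', Y', hX'X, inf_le_left, ?_, ?_, ?_⟩
  · rw [hX'rank]; omega
  · have horth : Module.finrank ℝ X' + Module.finrank ℝ X'ᗮ = n := by
      simpa using (Submodule.finrank_add_finrank_orthogonal (K := X'))
    have hsum : Module.finrank ℝ ↥(Y ⊔ X'ᗮ) + Module.finrank ℝ ↥(Y ⊓ X'ᗮ)
        = Module.finrank ℝ Y + Module.finrank ℝ X'ᗮ :=
      Submodule.finrank_sup_add_finrank_inf_eq Y X'ᗮ
    have hle : Module.finrank ℝ ↥(Y ⊔ X'ᗮ) ≤ n := by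
      simpa using Submodule.finrank_le (Y ⊔ X'ᗮ)
    have hmn : m ≤ n := by
      calc m = Module.finrank ℝ X := hX.symm
        _ ≤ n := by simpa using Submodule.finrank_le X
    rw [hY']
    omega
  · intro x hx y hy
    exact hy.2 x hx
end

section
/- Let X, Y be subspaces of ℝⁿ with dim X = dim Y = m, and let a < b be reals. Then there exists a continuous choice of m-dimensional subspaces {U(t)}_{t ∈ [a,b]} of ℝⁿ (i.e. the map t ↦ orthogonal projection onto U(t) is continuous) such that U(a) = X, U(b) = Y, and U(t) ⊆ X + Y for all t ∈ [a,b]. -/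
open scoped RealInnerProductSpace BigOperators

open Module Matrix

/-- A vector avoiding two proper subspaces. -/
lemma exists_notMem_pair {V : Type*} [AddCommGroup V] [Module ℝ V]
    {X Y : Submodule ℝ V} (hX : X ≠ ⊤) (hY : Y ≠ ⊤) : ∃ v, v ∉ X ∧ v ∉ Y := by
  by_contra h
  push_neg at h
  have hcov : ⋃ i, ((![X, Y] i : Subspace ℝ V) : Set V) = Set.univ := by
    apply Set.eq_univ_of_forall
    intro v
    rcases Classical.em (v ∈ X) with hv | hv
    · exact Set.mem_iUnion.2 ⟨0, hv⟩
    · exact Set.mem_iUnion.2 ⟨1, h v hv⟩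
  obtain ⟨i, hi⟩ := Subspace.exists_eq_top_of_iUnion_eq_univ hcov
  fin_cases i
  · exact hX hi
  · exact hY hi

lemma exists_common_compl_aux {V : Type*} [AddCommGroup V] [Module ℝ V]
    [FiniteDimensional ℝ V] :
    ∀ (k : ℕ) (X Y : Submodule ℝ V), finrank ℝ X = finrank ℝ Y →
      finrank ℝ V ≤ finrank ℝ X + k →
      ∃ C : Submodule ℝ V, IsCompl X C ∧ IsCompl Y C := by
  intro k
  induction k with
  | zero =>
    intro X Y hXY hle
    have hXt : X = ⊤ := Submodule.eq_top_of_finrank_eq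
      (le_antisymm (Submodule.finrank_le X) (by simpa using hle))
    have hYt : Y = ⊤ := Submodule.eq_top_of_finrank_eq
      (le_antisymm (Submodule.finrank_le Y) (by rw [← hXY]; simpa using hle))
    exact ⟨⊥, by rw [hXt, hYt]; exact ⟨isCompl_top_bot, isCompl_top_bot⟩⟩
  | succ k ih =>
    intro X Y hXY hle
    by_cases hXt : X = ⊤
    · have hYt : Y = ⊤ := Submodule.eq_top_of_finrank_eq
        (by rw [← hXY, hXt]; exact finrank_top ℝ V)
      exact ⟨⊥, by rw [hXt, hYt]; exact ⟨isCompl_top_bot, isCompl_top_bot⟩⟩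
    · have hYt : Y ≠ ⊤ := by
        intro h
        exact hXt (Submodule.eq_top_of_finrank_eq (by rw [hXY, h]; exact finrank_top ℝ V))
      obtain ⟨v, hvX, hvY⟩ := exists_notMem_pair hXt hYt
      have hv0 : v ≠ 0 := fun h => hvX (h ▸ X.zero_mem)
      have hspan : finrank ℝ (ℝ ∙ v) = 1 := finrank_span_singleton hv0
      have hsup : ∀ Z : Submodule ℝ V, v ∉ Z →
          finrank ℝ ↥(Z ⊔ ℝ ∙ v) = finrank ℝ Z + 1 := by
        intro Z hvZ
        have hd : Z ⊓ (ℝ ∙ v) = ⊥ :=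
          ((Submodule.disjoint_span_singleton' hv0).mpr hvZ).eq_bot
        have key := Submodule.finrank_sup_add_finrank_inf_eq Z (ℝ ∙ v)
        rw [hd, finrank_bot, add_zero, hspan] at key
        exact key
      obtain ⟨C', hC'X, hC'Y⟩ := ih (X ⊔ ℝ ∙ v) (Y ⊔ ℝ ∙ v)
        (by rw [hsup X hvX, hsup Y hvY, hXY])
        (by rw [hsup X hvX]; omega)
      have key : ∀ Z : Submodule ℝ V, v ∉ Z → IsCompl (Z ⊔ ℝ ∙ v) C' →
          IsCompl Z (C' ⊔ ℝ ∙ v) := by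
        intro Z hvZ hcompl
        constructor
        · rw [Submodule.disjoint_def]
          intro x hxZ hxC
          obtain ⟨c, hc, w, hw, rfl⟩ := Submodule.mem_sup.mp hxC
          have hcZ' : c ∈ Z ⊔ ℝ ∙ v := by
            have hcw : c + w ∈ Z ⊔ ℝ ∙ v := Submodule.mem_sup_left hxZ
            rw [(add_sub_cancel_right c w).symm]
            exact sub_mem hcw (Submodule.mem_sup_right hw)
          have hc0 : c = 0 := Submodule.disjoint_def.mp hcompl.disjoint c hcZ' hc
          have hwZ : w ∈ Z := by
            have : c + w ∈ Z := hxZ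
            rwa [hc0, zero_add] at this
          have hw0 : w = 0 :=
            Submodule.disjoint_def.mp ((Submodule.disjoint_span_singleton' hv0).mpr hvZ)
              w hwZ hw
          rw [hc0, hw0, add_zero]
        · rw [codisjoint_iff]
          have h1 : (Z ⊔ ℝ ∙ v) ⊔ C' = ⊤ := codisjoint_iff.mp hcompl.codisjoint
          rw [sup_comm C' (ℝ ∙ v), ← sup_assoc]
          exact h1
      exact ⟨C' ⊔ ℝ ∙ v, key X hvX hC'X, key Y hvY hC'Y⟩

lemma exists_common_compl {V : Type*} [AddCommGroup V] [Module ℝ V]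
    [FiniteDimensional ℝ V] (X Y : Submodule ℝ V) (hXY : finrank ℝ X = finrank ℝ Y) :
    ∃ C : Submodule ℝ V, IsCompl X C ∧ IsCompl Y C :=
  exists_common_compl_aux (finrank ℝ V) X Y hXY (Nat.le_add_left _ _)

lemma toEuclideanLin_mul {n m k : ℕ} (M : Matrix (Fin n) (Fin m) ℝ)
    (N : Matrix (Fin m) (Fin k) ℝ) :
    Matrix.toEuclideanLin (M * N) =
      (Matrix.toEuclideanLin M).comp (Matrix.toEuclideanLin N) := by
  refine LinearMap.ext fun v => ?_
  simp [Matrix.toEuclideanLin_apply, Matrix.mulVec_mulVec]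

lemma toEuclideanLin_transpose {n m : ℕ} (A : Matrix (Fin n) (Fin m) ℝ) :
    Matrix.toEuclideanLin Aᵀ = LinearMap.adjoint (Matrix.toEuclideanLin A) := by
  rw [← Matrix.conjTranspose_eq_transpose_of_trivial]
  exact Matrix.toEuclideanLin_conjTranspose_eq_adjoint A

/-- Explicit formula `A * B * Aᵀ` for the projection onto the range of `A`,
where `B` is a right inverse of the Gram matrix `Aᵀ * A`. -/
lemma projMatrix_range_eq {n m : ℕ} (A : Matrix (Fin n) (Fin m) ℝ)
    (B : Matrix (Fin m) (Fin m) ℝ) (hB : Aᵀ * A * B = 1) :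
    projMatrix (LinearMap.range (Matrix.toEuclideanLin A)) = A * B * Aᵀ := by
  set U := LinearMap.range (Matrix.toEuclideanLin A) with hU
  have main : U.subtype ∘ₗ (U.orthogonalProjection).toLinearMap
      = Matrix.toEuclideanLin (A * B * Aᵀ) := by
    refine LinearMap.ext fun v => ?_
    have hmem : Matrix.toEuclideanLin (A * B * Aᵀ) v ∈ U := by
      rw [Matrix.mul_assoc, toEuclideanLin_mul]
      exact LinearMap.mem_range_self _ _
    have horth : v - Matrix.toEuclideanLin (A * B * Aᵀ) v ∈ Uᗮ := by
      rw [Submodule.mem_orthogonal]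
      rintro w ⟨z, rfl⟩
      have hz : Matrix.toEuclideanLin Aᵀ (v - Matrix.toEuclideanLin (A * B * Aᵀ) v) = 0 := by
        rw [map_sub, ← LinearMap.comp_apply, ← toEuclideanLin_mul]
        have hcol : Aᵀ * (A * B * Aᵀ) = Aᵀ := by
          rw [show Aᵀ * (A * B * Aᵀ) = Aᵀ * A * B * Aᵀ by rw [← Matrix.mul_assoc, ← Matrix.mul_assoc], hB, Matrix.one_mul]
        rw [hcol, sub_self]
      calc ⟪Matrix.toEuclideanLin A z, v - Matrix.toEuclideanLin (A * B * Aᵀ) v⟫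
          = ⟪z, Matrix.toEuclideanLin Aᵀ (v - Matrix.toEuclideanLin (A * B * Aᵀ) v)⟫ := by
            rw [toEuclideanLin_transpose, LinearMap.adjoint_inner_right]
        _ = 0 := by rw [hz, inner_zero_right]
    simpa using (Submodule.eq_starProjection_of_mem_orthogonal hmem horth)
  rw [projMatrix, main, LinearEquiv.symm_apply_apply]

/-- Given two `m`-dimensional subspaces `X, Y` of `ℝⁿ` and reals `a < b`, there is a
continuous choice of `m`-dimensional subspaces `{U(t)}_{t ∈ [a,b]}` with `U(a) = X`,
`U(b) = Y`, and `U(t) ⊆ X + Y` for all `t ∈ [a,b]`. -/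
theorem continuous_traversal_of_subspaces {n m : ℕ}
    (X Y : Submodule ℝ (EuclideanSpace ℝ (Fin n)))
    (hX : Module.finrank ℝ X = m) (hY : Module.finrank ℝ Y = m)
    (a b : ℝ) (hab : a < b) :
    ∃ U : ℝ → Submodule ℝ (EuclideanSpace ℝ (Fin n)),
      ContinuousOn (fun t => projMatrix (U t)) (Set.Icc a b) ∧
      U a = X ∧ U b = Y ∧
      ∀ t ∈ Set.Icc a b, Module.finrank ℝ (U t) = m ∧ U t ≤ X ⊔ Y := by
  classical
  obtain ⟨C, hXC, hYC⟩ := exists_common_compl X Y (hX.trans hY.symm)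
  set p : EuclideanSpace ℝ (Fin n) →ₗ[ℝ] X := Submodule.projectionOnto X C hXC with hp
  set q : Y →ₗ[ℝ] X := p ∘ₗ Y.subtype with hq
  have hqinj : Function.Injective q := by
    intro y₁ y₂ hy
    have h0 : p ((y₁ : EuclideanSpace ℝ (Fin n)) - y₂) = 0 := by
      rw [map_sub]
      rw [hq] at hy
      simpa using sub_eq_zero_of_eq hy
    have hC : (y₁ : EuclideanSpace ℝ (Fin n)) - y₂ ∈ C := by
      have := LinearMap.mem_ker.mpr h0
      rwa [hp, Submodule.ker_projectionOnto] at this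
    have hYmem : (y₁ : EuclideanSpace ℝ (Fin n)) - y₂ ∈ Y := sub_mem y₁.2 y₂.2
    have := Submodule.disjoint_def.mp hYC.disjoint _ hYmem hC
    exact Subtype.ext (sub_eq_zero.mp this)
  have hfr : finrank ℝ Y = finrank ℝ X := hY.trans hX.symm
  set e : Y ≃ₗ[ℝ] X := q.linearEquivOfInjective hqinj hfr with he
  set g : X →ₗ[ℝ] EuclideanSpace ℝ (Fin n) := Y.subtype ∘ₗ e.symm.toLinearMap with hg
  have hgY : ∀ x : X, g x ∈ Y := fun x => (e.symm x).2
  have hpg : ∀ x : X, p (g x) = x := by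
    intro x
    have h1 : q (e.symm x) = e (e.symm x) :=
      (q.linearEquivOfInjective_apply hqinj hfr _).symm
    have h2 : q (e.symm x) = p (g x) := by rw [hq, hg]; rfl
    rw [← h2, h1, e.apply_symm_apply]
  have hpX : ∀ x : X, p (X.subtype x) = x := fun x =>
    Submodule.projectionOnto_apply_left hXC x
  set φ : ℝ → (X →ₗ[ℝ] EuclideanSpace ℝ (Fin n)) :=
    fun s => (1 - s) • X.subtype + s • g with hφ
  have hpφ : ∀ s x, p (φ s x) = x := by
    intro s x
    have : φ s x = (1 - s) • (X.subtype x) + s • (g x) := by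
      simp [hφ]
    rw [this, map_add, _root_.map_smul, _root_.map_smul, hpg x, hpX x, ← add_smul, sub_add_cancel, one_smul]
  have hφinj : ∀ s, Function.Injective (φ s) := by
    intro s x₁ x₂ h
    have := congrArg p h
    rwa [hpφ, hpφ] at this
  set σ : ℝ → ℝ := fun t => (t - a) / (b - a) with hσ
  set U : ℝ → Submodule ℝ (EuclideanSpace ℝ (Fin n)) :=
    fun t => LinearMap.range (φ (σ t)) with hUdef
  have hφ0 : φ 0 = X.subtype := by
    refine LinearMap.ext fun x => ?_
    simp [hφ]
  have hφ1 : φ 1 = g := by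
    refine LinearMap.ext fun x => ?_
    simp [hφ]
  have hσa : σ a = 0 := by simp [hσ]
  have hσb : σ b = 1 := div_self (sub_ne_zero.mpr hab.ne')
  have hUa : U a = X := by
    show LinearMap.range (φ (σ a)) = X
    rw [hσa, hφ0, Submodule.range_subtype]
  have hUb : U b = Y := by
    show LinearMap.range (φ (σ b)) = Y
    rw [hσb, hφ1, hg, LinearMap.range_comp_of_range_eq_top _ (LinearEquiv.range _),
      Submodule.range_subtype]
  have hUrank : ∀ t, finrank ℝ (U t) = m := by
    intro t
    rw [hUdef]
    rw [LinearMap.finrank_range_of_inj (hφinj (σ t)), hX]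
  have hUle : ∀ t, U t ≤ X ⊔ Y := by
    intro t
    rintro _ ⟨x, rfl⟩
    have hx : φ (σ t) x = (1 - σ t) • (X.subtype x) + σ t • (g x) := by simp [hφ]
    rw [hx]
    exact add_mem (Submodule.mem_sup_left (X.smul_mem _ x.2))
      (Submodule.mem_sup_right (Y.smul_mem _ (hgY x)))
  -- continuity of the projection matrices
  set β : EuclideanSpace ℝ (Fin m) ≃ₗ[ℝ] X :=
    (WithLp.linearEquiv 2 ℝ (Fin m → ℝ)).trans
      (Module.finBasisOfFinrankEq ℝ X hX).equivFun.symm with hβ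
  set ψ : ℝ → (EuclideanSpace ℝ (Fin m) →ₗ[ℝ] EuclideanSpace ℝ (Fin n)) :=
    fun s => (φ s) ∘ₗ β.toLinearMap with hψ
  have hψinj : ∀ s, Function.Injective (ψ s) :=
    fun s => (hφinj s).comp β.injective
  have hrangeψ : ∀ s, LinearMap.range (ψ s) = LinearMap.range (φ s) := by
    intro s
    exact LinearMap.range_comp_of_range_eq_top _ (LinearEquiv.range β)
  set M0 : Matrix (Fin n) (Fin m) ℝ :=
    Matrix.toEuclideanLin.symm (X.subtype ∘ₗ β.toLinearMap) with hM0
  set M1 : Matrix (Fin n) (Fin m) ℝ :=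
    Matrix.toEuclideanLin.symm (g ∘ₗ β.toLinearMap) with hM1
  set Amat : ℝ → Matrix (Fin n) (Fin m) ℝ := fun s => (1 - s) • M0 + s • M1 with hA
  have hAψ : ∀ s, Matrix.toEuclideanLin (Amat s) = ψ s := by
    intro s
    have : ψ s = (1 - s) • (X.subtype ∘ₗ β.toLinearMap) + s • (g ∘ₗ β.toLinearMap) := by
      refine LinearMap.ext fun v => ?_
      simp [hψ, hφ]
    rw [this, hA]
    simp only [map_add, _root_.map_smul, hM0, hM1, LinearEquiv.apply_symm_apply]
  set G : ℝ → Matrix (Fin m) (Fin m) ℝ := fun s => (Amat s)ᵀ * Amat s with hG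
  have hdet : ∀ s, (G s).det ≠ 0 := by
    intro s
    have hinj : Function.Injective (Matrix.toEuclideanLin (G s)) := by
      have hGeq : Matrix.toEuclideanLin (G s) =
          (LinearMap.adjoint (ψ s)) ∘ₗ (ψ s) := by
        rw [hG, toEuclideanLin_mul, toEuclideanLin_transpose, hAψ]
      intro x₁ x₂ hx
      have h0 : Matrix.toEuclideanLin (G s) (x₁ - x₂) = 0 := by
        rw [map_sub, hx, sub_self]
      have h1 : ⟪ψ s (x₁ - x₂), ψ s (x₁ - x₂)⟫ = 0 := by
        rw [← LinearMap.adjoint_inner_right]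
        have : LinearMap.adjoint (ψ s) (ψ s (x₁ - x₂)) = 0 := by
          rw [← LinearMap.comp_apply, ← hGeq, h0]
        rw [this, inner_zero_right]
      have h2 : ψ s (x₁ - x₂) = 0 := by
        exact inner_self_eq_zero.mp h1
      have h3 : x₁ - x₂ = 0 := by
        apply hψinj s
        rw [h2, map_zero]
      exact sub_eq_zero.mp h3
    have hmv : Function.Injective ((G s).mulVec) := by
      intro v w hvw
      have h1 : Matrix.toEuclideanLin (G s) ((WithLp.equiv 2 (Fin m → ℝ)).symm v)
          = Matrix.toEuclideanLin (G s) ((WithLp.equiv 2 (Fin m → ℝ)).symm w) := by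
        simp [Matrix.toEuclideanLin_apply, hvw]
      have := hinj h1
      simpa using congrArg (WithLp.equiv 2 (Fin m → ℝ)) this
    exact ((Matrix.isUnit_iff_isUnit_det _).mp
      (Matrix.mulVec_injective_iff_isUnit.mp hmv)).ne_zero
  set Bmat : ℝ → Matrix (Fin m) (Fin m) ℝ :=
    fun s => ((G s).det)⁻¹ • (G s).adjugate with hB
  have hGB : ∀ s, (Amat s)ᵀ * Amat s * Bmat s = 1 := by
    intro s
    have : (Amat s)ᵀ * Amat s = G s := rfl
    rw [this, hB, Matrix.mul_smul, Matrix.mul_adjugate, smul_smul,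
      inv_mul_cancel₀ (hdet s), one_smul]
  have hproj : ∀ t, projMatrix (U t) = Amat (σ t) * Bmat (σ t) * (Amat (σ t))ᵀ := by
    intro t
    have hUt : U t = LinearMap.range (Matrix.toEuclideanLin (Amat (σ t))) := by
      rw [hAψ, hrangeψ]
    rw [hUt, projMatrix_range_eq _ _ (hGB (σ t))]
  have hcont : Continuous fun t => projMatrix (U t) := by
    have heq : (fun t => projMatrix (U t))
        = fun t => Amat (σ t) * Bmat (σ t) * (Amat (σ t))ᵀ := funext hproj
    rw [heq]
    have hσc : Continuous σ := by
      rw [hσ]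
      exact (continuous_id.sub continuous_const).div_const _
    have hAc : Continuous fun t => Amat (σ t) := by
      apply continuous_matrix
      intro i j
      simp only [hA, Matrix.add_apply, Matrix.smul_apply, smul_eq_mul]
      exact ((continuous_const.sub hσc).mul continuous_const).add
        (hσc.mul continuous_const)
    have hGc : Continuous fun t => G (σ t) := hAc.matrix_transpose.matrix_mul hAc
    have hBc : Continuous fun t => Bmat (σ t) := by
      apply Continuous.fun_smul
      · exact hGc.matrix_det.inv₀ (fun t => hdet (σ t))
      · exact hGc.matrix_adjugate
    exact (hAc.matrix_mul hBc).matrix_mul hAc.matrix_transpose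
  exact ⟨U, hcont.continuousOn, hUa, hUb, fun t _ => ⟨hUrank t, hUle t⟩⟩
end
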